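/- Let D be a connected locally semicomplete digraph in which no maximal weak hub is mixed, and let X, Y be two distinct maximal weak hubs. Then either X strictly in-dominates Y, or X strictly out-dominates Y, or there are no arcs between X and Y. -/

import Mathlib

/-- `A` is the arc relation of an oriented graph: no loops and no digons. -/
def IsOriented {V : Type*} (A : V → V → Prop) : Prop :=
  Irreflexive A ∧ ∀ x y, A x y → ¬ A y x

/-- `D` is strong: a directed path between each ordered pair of vertices. -/
def IsStrong {V : Type*} (A : V → V → Prop) : Prop :=
  ∀ x y : V, Relation.ReflTransGen A x y

/-- The set `S` induces a strong subdigraph (all paths staying inside `S`). -/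
def StrongOn {V : Type*} (A : V → V → Prop) (S : Set V) : Prop :=
  ∀ x ∈ S, ∀ y ∈ S, Relation.ReflTransGen (fun a b => a ∈ S ∧ b ∈ S ∧ A a b) x y

/-- The set `S` induces a tournament. -/
def TournamentOn {V : Type*} (A : V → V → Prop) (S : Set V) : Prop :=
  ∀ x ∈ S, ∀ y ∈ S, x ≠ y → A x y ∨ A y x

/-- The set `S` induces an acyclic digraph. -/
def AcyclicOn {V : Type*} (A : V → V → Prop) (S : Set V) : Prop :=
  ∀ x : V, ¬ Relation.TransGen (fun a b => a ∈ S ∧ b ∈ S ∧ A a b) x x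

/-- The set `S` induces a semicomplete digraph. -/
def SemicompleteOn {V : Type*} (A : V → V → Prop) (S : Set V) : Prop :=
  ∀ x ∈ S, ∀ y ∈ S, x ≠ y → A x y ∨ A y x

/-- `z` lies strictly inside the cyclic interval `]x,y[` for the cyclic order `σ`. -/
def CycBtw {V : Type*} [Fintype V] (σ : V ≃ Fin (Fintype.card V)) (x z y : V) : Prop :=
  0 < (σ z - σ x).val ∧ (σ z - σ x).val < (σ y - σ x).val

/-- In-round: a cyclic order such that for every arc `xy` and `z ∈ ]x,y[`, `zy` is an arc. -/
def InRound {V : Type*} [Fintype V] (A : V → V → Prop) : Prop :=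
  ∃ σ : V ≃ Fin (Fintype.card V), ∀ x y z : V, A x y → CycBtw σ x z y → A z y

/-- Out-round: a cyclic order such that for every arc `xy` and `z ∈ ]x,y[`, `xz` is an arc. -/
def OutRound {V : Type*} [Fintype V] (A : V → V → Prop) : Prop :=
  ∃ σ : V ≃ Fin (Fintype.card V), ∀ x y z : V, A x y → CycBtw σ x z y → A x z

/-- Every out-neighbourhood induces a transitive tournament. -/
def LocallyOutTransitive {V : Type*} (A : V → V → Prop) : Prop :=
  ∀ x : V, TournamentOn A {y | A x y} ∧ AcyclicOn A {y | A x y}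

/-- A hub: a nonempty set inducing a strong subdigraph, all of whose vertices are
in-neighbours of some vertex outside of it. -/
def Hub {V : Type*} (A : V → V → Prop) (H : Set V) : Prop :=
  H.Nonempty ∧ StrongOn A H ∧ ∃ x ∉ H, ∀ h ∈ H, A h x

/-- Locally semicomplete digraph: no loops, and every out- and in-neighbourhood
induces a semicomplete digraph (digons are allowed). -/
def LocallySemicomplete {V : Type*} (A : V → V → Prop) : Prop :=
  Irreflexive A ∧ (∀ x : V, SemicompleteOn A {y | A x y}) ∧
    ∀ x : V, SemicompleteOn A {y | A y x}

/-- The underlying undirected graph is connected. -/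
def ConnectedDigraph {V : Type*} (A : V → V → Prop) : Prop :=
  ∀ x y : V, Relation.ReflTransGen (fun a b => A a b ∨ A b a) x y

/-- A weak hub: a nonempty set inducing a strong subdigraph that is strictly
in-dominated or strictly out-dominated by some vertex outside of it. -/
def WeakHub {V : Type*} (A : V → V → Prop) (X : Set V) : Prop :=
  X.Nonempty ∧ StrongOn A X ∧
    ∃ x ∉ X, (∀ u ∈ X, A u x ∧ ¬ A x u) ∨ ∀ u ∈ X, A x u ∧ ¬ A u x

/-- A set `X` is mixed if some outside vertex has both an out-neighbour and an
in-neighbour in `X`. -/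
def MixedSet {V : Type*} (A : V → V → Prop) (X : Set V) : Prop :=
  ∃ x ∉ X, (∃ u ∈ X, A x u) ∧ ∃ v ∈ X, A v x

/-- `X` is an inclusion-wise maximal weak hub. -/
def MaxWeakHub {V : Type*} (A : V → V → Prop) (X : Set V) : Prop :=
  WeakHub A X ∧ ∀ Y : Set V, WeakHub A Y → X ⊆ Y → Y = X

section Helpers

variable {V : Type*} {A : V → V → Prop}

private lemma crossing {R : V → V → Prop} (P : V → Prop) :
    ∀ {a b : V}, Relation.ReflTransGen R a b → P a → ¬ P b →
      ∃ u v, P u ∧ ¬ P v ∧ R u v := by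
  intro a b h
  induction h with
  | refl => intro ha hb; exact absurd ha hb
  | @tail c d h1 h2 ih =>
    intro ha hd
    by_cases hc : P c
    · exact ⟨c, d, hc, hd, h2⟩
    · exact ih ha hc

/-- If `z ∉ X` has an out-neighbour in a strong non-mixed set `X`,
then `z` strictly out-dominates `X`. -/
private lemma lemOut (hls : LocallySemicomplete A) {X : Set V}
    (hXs : StrongOn A X) (hnm : ¬ MixedSet A X) {z : V} (hz : z ∉ X)
    {u : V} (hu : u ∈ X) (hzu : A z u) : ∀ w ∈ X, A z w ∧ ¬ A w z := by
  have key : ∀ w, Relation.ReflTransGen (fun a b => a ∈ X ∧ b ∈ X ∧ A a b) w u →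
      A z w := by
    intro w hpath
    induction hpath using Relation.ReflTransGen.head_induction_on with
    | refl => exact hzu
    | head h' _ ih =>
      obtain ⟨ha, hb, hab⟩ := h'
      rcases hls.2.2 _ z ih _ hab (by rintro rfl; exact hz ha) with h | h
      · exact h
      · exact absurd ⟨z, hz, ⟨u, hu, hzu⟩, ⟨_, ha, h⟩⟩ hnm
  intro w hw
  exact ⟨key w (hXs w hw u hu),
    fun h => hnm ⟨z, hz, ⟨u, hu, hzu⟩, ⟨w, hw, h⟩⟩⟩

/-- If `z ∉ X` has an in-neighbour in a strong non-mixed set `X`,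
then `z` is strictly in-dominated by `X`. -/
private lemma lemIn (hls : LocallySemicomplete A) {X : Set V}
    (hXs : StrongOn A X) (hnm : ¬ MixedSet A X) {z : V} (hz : z ∉ X)
    {u : V} (hu : u ∈ X) (huz : A u z) : ∀ w ∈ X, A w z ∧ ¬ A z w := by
  have key : ∀ w, Relation.ReflTransGen (fun a b => a ∈ X ∧ b ∈ X ∧ A a b) u w →
      A w z := by
    intro w hpath
    induction hpath with
    | refl => exact huz
    | @tail c d h1 h2 ih =>
      obtain ⟨hc, hd, hcd⟩ := h2
      rcases hls.2.1 c _ hcd z ih (by rintro rfl; exact hz hd) with h | h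
      · exact h
      · exact absurd ⟨z, hz, ⟨d, hd, h⟩, ⟨u, hu, huz⟩⟩ hnm
  intro w hw
  exact ⟨key w (hXs u hu w hw),
    fun h => hnm ⟨z, hz, ⟨w, hw, h⟩, ⟨u, hu, huz⟩⟩⟩

private lemma strong_union {X Y : Set V} (hX : StrongOn A X) (hY : StrongOn A Y)
    {v : V} (hvX : v ∈ X) (hvY : v ∈ Y) : StrongOn A (X ∪ Y) := by
  have liftX : ∀ {a b}, Relation.ReflTransGen (fun a b => a ∈ X ∧ b ∈ X ∧ A a b) a b →
      Relation.ReflTransGen (fun a b => a ∈ X ∪ Y ∧ b ∈ X ∪ Y ∧ A a b) a b :=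
    fun h => Relation.ReflTransGen.mono (fun a b hab => ⟨Or.inl hab.1, Or.inl hab.2.1, hab.2.2⟩) _ _ h
  have liftY : ∀ {a b}, Relation.ReflTransGen (fun a b => a ∈ Y ∧ b ∈ Y ∧ A a b) a b →
      Relation.ReflTransGen (fun a b => a ∈ X ∪ Y ∧ b ∈ X ∪ Y ∧ A a b) a b :=
    fun h => Relation.ReflTransGen.mono (fun a b hab => ⟨Or.inr hab.1, Or.inr hab.2.1, hab.2.2⟩) _ _ h
  intro x hx y hy
  have h1 : Relation.ReflTransGen (fun a b => a ∈ X ∪ Y ∧ b ∈ X ∪ Y ∧ A a b) x v := by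
    rcases hx with hx | hx
    · exact liftX (hX x hx v hvX)
    · exact liftY (hY x hx v hvY)
  have h2 : Relation.ReflTransGen (fun a b => a ∈ X ∪ Y ∧ b ∈ X ∪ Y ∧ A a b) v y := by
    rcases hy with hy | hy
    · exact liftX (hX v hvX y hy)
    · exact liftY (hY v hvY y hy)
  exact h1.trans h2

private lemma union_eq {X Y : Set V}
    (hX : MaxWeakHub A X) (hY : MaxWeakHub A Y) {v : V} (hvX : v ∈ X) (hvY : v ∈ Y)
    {z : V} (hzX : z ∉ X) (hzY : z ∉ Y)
    (hdom : (∀ u ∈ X ∪ Y, A u z ∧ ¬ A z u) ∨ (∀ u ∈ X ∪ Y, A z u ∧ ¬ A u z)) :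
    X = Y := by
  have hub : WeakHub A (X ∪ Y) :=
    ⟨⟨v, Or.inl hvX⟩, strong_union hX.1.2.1 hY.1.2.1 hvX hvY,
      ⟨z, fun h => h.elim hzX hzY, hdom⟩⟩
  have h1 := hX.2 _ hub Set.subset_union_left
  have h2 := hY.2 _ hub Set.subset_union_right
  exact h1.symm.trans h2

end Helpers

theorem stmt16 {V : Type*} [Fintype V] (A : V → V → Prop)
    (hls : LocallySemicomplete A) (hconn : ConnectedDigraph A)
    (hnomix : ∀ Z : Set V, MaxWeakHub A Z → ¬ MixedSet A Z)
    (X Y : Set V) (hX : MaxWeakHub A X) (hY : MaxWeakHub A Y) (hne : X ≠ Y) :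
    (∀ x ∈ X, ∀ y ∈ Y, A y x ∧ ¬ A x y) ∨
    (∀ x ∈ X, ∀ y ∈ Y, A x y ∧ ¬ A y x) ∨
    (∀ x ∈ X, ∀ y ∈ Y, ¬ A x y ∧ ¬ A y x) := by
  classical
  have hnmX := hnomix X hX
  have hnmY := hnomix Y hY
  have hXne := hX.1.1
  have hXs := hX.1.2.1
  have hYs := hY.1.2.1
  obtain ⟨x₀, hx₀, hx₀d⟩ := hX.1.2.2
  obtain ⟨y₀, hy₀, hy₀d⟩ := hY.1.2.2
  -- Distinct maximal weak hubs are disjoint.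
  have hdisj : ∀ v, v ∈ X → v ∈ Y → False := by
    intro v hvX hvY
    by_cases hy₀X : y₀ ∈ X
    · by_cases hx₀Y : x₀ ∈ Y
      · rcases hx₀d with hx | hx <;> rcases hy₀d with hy | hy
        · exact (hy x₀ hx₀Y).2 (hx y₀ hy₀X).1
        · obtain ⟨u, w, hPu, hPw, hR⟩ :=
            crossing (fun t => t ∉ X) (hYs x₀ hx₀Y v hvY) hx₀ (not_not_intro hvX)
          have hOu := lemOut hls hXs hnmX hPu (not_not.mp hPw) hR.2.2
          exact (hOu y₀ hy₀X).2 (hy u hR.1).1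
        · obtain ⟨u, w, hPu, hPw, hR⟩ :=
            crossing (fun t => t ∈ X) (hYs v hvY x₀ hx₀Y) hvX hx₀
          have hIw := lemIn hls hXs hnmX hPw hPu hR.2.2
          exact (hIw y₀ hy₀X).2 (hy w hR.2.1).1
        · exact (hy x₀ hx₀Y).2 (hx y₀ hy₀X).1
      · rcases hx₀d with hx | hx
        · have hIY := lemIn hls hYs hnmY hx₀Y hvY (hx v hvX).1
          exact hne (union_eq hX hY hvX hvY hx₀ hx₀Y
            (Or.inl fun u hu => hu.elim (fun h => hx u h) (fun h => hIY u h)))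
        · have hOY := lemOut hls hYs hnmY hx₀Y hvY (hx v hvX).1
          exact hne (union_eq hX hY hvX hvY hx₀ hx₀Y
            (Or.inr fun u hu => hu.elim (fun h => hx u h) (fun h => hOY u h)))
    · rcases hy₀d with hy | hy
      · have hIX := lemIn hls hXs hnmX hy₀X hvX (hy v hvY).1
        exact hne (union_eq hX hY hvX hvY hy₀X hy₀
          (Or.inl fun u hu => hu.elim (fun h => hIX u h) (fun h => hy u h)))
      · have hOX := lemOut hls hXs hnmX hy₀X hvX (hy v hvY).1
        exact hne (union_eq hX hY hvX hvY hy₀X hy₀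
          (Or.inr fun u hu => hu.elim (fun h => hOX u h) (fun h => hy u h)))
  -- Trichotomy for each vertex of `Y`.
  have htri : ∀ y ∈ Y, (∀ x ∈ X, A y x ∧ ¬ A x y) ∨ (∀ x ∈ X, A x y ∧ ¬ A y x) ∨
      (∀ x ∈ X, ¬ A x y ∧ ¬ A y x) := by
    intro y hy
    have hyX : y ∉ X := fun h => hdisj y h hy
    by_cases h1 : ∃ x ∈ X, A y x
    · obtain ⟨x, hx, hyx⟩ := h1
      exact Or.inl (lemOut hls hXs hnmX hyX hx hyx)
    · by_cases h2 : ∃ x ∈ X, A x y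
      · obtain ⟨x, hx, hxy⟩ := h2
        exact Or.inr (Or.inl (lemIn hls hXs hnmX hyX hx hxy))
      · exact Or.inr (Or.inr fun x hx =>
          ⟨fun h => h2 ⟨x, hx, h⟩, fun h => h1 ⟨x, hx, h⟩⟩)
  have hmix : ∀ y1 ∈ Y, ∀ y2 ∈ Y, (∀ x ∈ X, A y1 x ∧ ¬ A x y1) →
      (∀ x ∈ X, A x y2 ∧ ¬ A y2 x) → False := by
    intro y1 hy1 y2 hy2 hO hI
    obtain ⟨x, hx⟩ := hXne
    exact hnmY ⟨x, fun h => hdisj x hx h, ⟨y2, hy2, (hI x hx).1⟩, ⟨y1, hy1, (hO x hx).1⟩⟩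
  by_cases hO : ∃ y ∈ Y, ∃ x ∈ X, A y x
  · obtain ⟨y1, hy1, x1, hx1, hy1x1⟩ := hO
    have hO1 := lemOut hls hXs hnmX (fun h => hdisj y1 h hy1) hx1 hy1x1
    refine Or.inl fun x hx y hy => ?_
    rcases htri y hy with h | h | h
    · exact h x hx
    · exact absurd (hmix y1 hy1 y hy hO1 h) id
    · exfalso
      obtain ⟨u, w, hPu, hPw, hR⟩ :=
        crossing (fun t => ∃ x' ∈ X, A t x') (hYs y1 hy1 y hy)
          ⟨x1, hx1, hy1x1⟩ (fun hh => by obtain ⟨x', hx', hyx'⟩ := hh; exact (h x' hx').2 hyx')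
      obtain ⟨xu, hxu, huxu⟩ := hPu
      rcases hls.2.1 u _ hR.2.2 _ huxu
          (fun he => hdisj xu hxu (he ▸ hR.2.1)) with h' | h'
      · exact hPw ⟨xu, hxu, h'⟩
      · exact hnmY ⟨xu, fun hh => hdisj xu hxu hh, ⟨w, hR.2.1, h'⟩, ⟨u, hR.1, huxu⟩⟩
  · by_cases hI : ∃ y ∈ Y, ∃ x ∈ X, A x y
    · obtain ⟨y1, hy1, x1, hx1, hx1y1⟩ := hI
      refine Or.inr (Or.inl fun x hx y hy => ?_)
      rcases htri y hy with h | h | h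
      · exact absurd ⟨y, hy, x, hx, (h x hx).1⟩ hO
      · exact h x hx
      · exfalso
        obtain ⟨u, w, hPu, hPw, hR⟩ :=
          crossing (fun t => ¬ ∃ x' ∈ X, A x' t) (hYs y hy y1 hy1)
            (fun hh => by obtain ⟨x', hx', hx'y⟩ := hh; exact (h x' hx').1 hx'y)
            (not_not_intro ⟨x1, hx1, hx1y1⟩)
        obtain ⟨xw, hxw, hxww⟩ := not_not.mp hPw
        rcases hls.2.2 w u hR.2.2 xw hxww
            (fun he => hdisj xw hxw (he ▸ hR.1)) with h' | h'
        · exact hO ⟨u, hR.1, xw, hxw, h'⟩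
        · exact hPu ⟨xw, hxw, h'⟩
    · exact Or.inr (Or.inr fun x hx y hy =>
        ⟨fun h => hI ⟨y, hy, x, hx, h⟩, fun h => hO ⟨y, hy, x, hx, h⟩⟩)
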